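/- Let X be a finite set and k*, k integers with 0 ≤ k* < k < |X| and 2k − k* ≤ |X|. Let 𝒫 be a collection of k-element subsets of X such that for all k-element subsets Z, Y of X with |Z ∩ Y| = k*, Z ∈ 𝒫 if and only if Y ∈ 𝒫. Then either 𝒫 is empty, or 𝒫 consists of all k-element subsets of X, or else |X| = 2k, k* = 0, and for every k-element subset Y of X, Y ∈ 𝒫 if and only if X ∖ Y ∈ 𝒫. -/

import Mathlib

open Finset

lemma swap_mem {X : Type*} [Fintype X] [DecidableEq X] (kstar k : ℕ)
    (h1 : kstar < k) (h2 : k < Fintype.card X)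
    (h3 : 2 * k - kstar ≤ Fintype.card X)
    (hne : ¬(Fintype.card X = 2 * k ∧ kstar = 0))
    (P : Set (Finset X))
    (hP : ∀ Z Y : Finset X, Z.card = k → Y.card = k → (Z ∩ Y).card = kstar →
      (Z ∈ P ↔ Y ∈ P))
    (Y : Finset X) (hY : Y.card = k) (a b : X) (ha : a ∈ Y) (hb : b ∉ Y)
    (hYP : Y ∈ P) : insert b (Y.erase a) ∈ P := by
  have hab : a ≠ b := fun h => hb (h ▸ ha)
  set Y' : Finset X := insert b (Y.erase a) with hY'def
  have hbe : b ∉ Y.erase a := fun h => hb (mem_of_mem_erase h)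
  have hY' : Y'.card = k := by
    rw [hY'def, card_insert_of_notMem hbe, card_erase_of_mem ha, hY]
    omega
  have hcompl : ((insert b Y)ᶜ).card = Fintype.card X - (k + 1) := by
    rw [card_compl, card_insert_of_notMem hb, hY]
  -- find W with card k, (W ∩ Y).card = kstar, (W ∩ Y').card = kstar
  have hW : ∃ W : Finset X, W.card = k ∧ (W ∩ Y).card = kstar ∧ (W ∩ Y').card = kstar := by
    rcases Nat.eq_zero_or_pos kstar with hk0 | hkpos
    · -- kstar = 0, n ≥ 2k+1
      have hn : 2 * k + 1 ≤ Fintype.card X := by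
        rcases Nat.lt_or_ge (Fintype.card X) (2 * k + 1) with h | h
        · exact absurd ⟨by omega, hk0⟩ hne
        · exact h
      obtain ⟨W, hWsub, hWcard⟩ := exists_subset_card_eq (s := (insert b Y)ᶜ) (n := k) (by omega)
      refine ⟨W, hWcard, ?_, ?_⟩
      · rw [hk0, card_eq_zero]
        apply eq_empty_of_forall_notMem
        intro x hx
        have := hWsub (mem_of_mem_inter_left hx)
        simp only [mem_compl, mem_insert, not_or] at this
        exact this.2 (mem_of_mem_inter_right hx)
      · rw [hk0, card_eq_zero]
        apply eq_empty_of_forall_notMem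
        intro x hx
        have h1 := hWsub (mem_of_mem_inter_left hx)
        have h2 := mem_of_mem_inter_right hx
        simp only [mem_compl, mem_insert, not_or] at h1
        rw [hY'def, mem_insert] at h2
        rcases h2 with h2 | h2
        · exact h1.1 h2
        · exact h1.2 (mem_of_mem_erase h2)
    · -- kstar ≥ 1
      have hcae : (Y.erase a).card = k - 1 := by rw [card_erase_of_mem ha, hY]
      obtain ⟨S, hSsub, hScard⟩ := exists_subset_card_eq (s := Y.erase a) (n := kstar - 1) (by omega)
      obtain ⟨T, hTsub, hTcard⟩ := exists_subset_card_eq (s := (insert b Y)ᶜ) (n := k - kstar - 1)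
        (by omega)
      have hSY : S ⊆ Y := hSsub.trans (erase_subset a Y)
      have haS : a ∉ S := fun h => (notMem_erase a Y) (hSsub h)
      have hbS : b ∉ S := fun h => hb (hSY h)
      have hTY : ∀ x ∈ T, x ∉ Y := by
        intro x hx
        have := hTsub hx
        simp only [mem_compl, mem_insert, not_or] at this
        exact this.2
      have hTb : ∀ x ∈ T, x ≠ b := by
        intro x hx
        have := hTsub hx
        simp only [mem_compl, mem_insert, not_or] at this
        exact this.1
      have haT : a ∉ T := fun h => hTY a h ha
      have hbT : b ∉ T := fun h => hTb b h rfl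
      have hST : Disjoint S T := by
        rw [disjoint_left]
        intro x hxS hxT
        exact hTY x hxT (hSY hxS)
      refine ⟨insert a (insert b (S ∪ T)), ?_, ?_, ?_⟩
      · rw [card_insert_of_notMem (by simp [hab, haS, haT]),
          card_insert_of_notMem (by simp [hbS, hbT]),
          card_union_of_disjoint hST, hScard, hTcard]
        omega
      · have : insert a (insert b (S ∪ T)) ∩ Y = insert a S := by
          ext x
          simp only [mem_inter, mem_insert, mem_union]
          constructor
          · rintro ⟨(rfl | rfl | hx | hx), hxY⟩
            · exact Or.inl rfl
            · exact absurd hxY hb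
            · exact Or.inr hx
            · exact absurd hxY (hTY x hx)
          · rintro (rfl | hx)
            · exact ⟨Or.inl rfl, ha⟩
            · exact ⟨Or.inr (Or.inr (Or.inl hx)), hSY hx⟩
        rw [this, card_insert_of_notMem haS, hScard]
        omega
      · have : insert a (insert b (S ∪ T)) ∩ Y' = insert b S := by
          ext x
          simp only [hY'def, mem_inter, mem_insert, mem_union, mem_erase]
          constructor
          · rintro ⟨(rfl | rfl | hx | hx), hxY'⟩
            · rcases hxY' with rfl | ⟨hxa, _⟩
              · exact Or.inl rfl
              · exact absurd rfl hxa
            · exact Or.inl rfl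
            · exact Or.inr hx
            · rcases hxY' with rfl | ⟨_, hxY⟩
              · exact absurd rfl (hTb x hx)
              · exact absurd hxY (hTY x hx)
          · rintro (rfl | hx)
            · exact ⟨Or.inr (Or.inl rfl), Or.inl rfl⟩
            · exact ⟨Or.inr (Or.inr (Or.inl hx)), Or.inr ⟨fun h => haS (h ▸ hx), hSY hx⟩⟩
        rw [this, card_insert_of_notMem hbS, hScard]
        omega
  obtain ⟨W, hWk, hW1, hW2⟩ := hW
  have step1 : Y ∈ P ↔ W ∈ P := hP Y W hY hWk (by rwa [inter_comm])
  have step2 : W ∈ P ↔ Y' ∈ P := hP W Y' hWk hY' hW2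
  exact step2.mp (step1.mp hYP)

lemma reach_mem {X : Type*} [Fintype X] [DecidableEq X] (kstar k : ℕ)
    (h1 : kstar < k) (h2 : k < Fintype.card X)
    (h3 : 2 * k - kstar ≤ Fintype.card X)
    (hne : ¬(Fintype.card X = 2 * k ∧ kstar = 0))
    (P : Set (Finset X))
    (hP : ∀ Z Y : Finset X, Z.card = k → Y.card = k → (Z ∩ Y).card = kstar →
      (Z ∈ P ↔ Y ∈ P)) :
    ∀ (n : ℕ) (Y Z : Finset X), (Z \ Y).card = n → Y.card = k → Z.card = k →
      Y ∈ P → Z ∈ P := by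
  intro n
  induction n using Nat.strong_induction_on with
  | _ n ih =>
    intro Y Z hcard hY hZ hYP
    rcases Nat.eq_zero_or_pos n with rfl | hnpos
    · have : Z \ Y = ∅ := card_eq_zero.mp hcard
      have hZY : Z ⊆ Y := by
        intro x hx
        by_contra hxY
        exact absurd (mem_sdiff.mpr ⟨hx, hxY⟩) (by simp [this])
      have : Z = Y := eq_of_subset_of_card_le hZY (by omega)
      exact this ▸ hYP
    · obtain ⟨b, hbmem⟩ := card_pos.mp (hcard ▸ hnpos)
      have hbZ : b ∈ Z := (mem_sdiff.mp hbmem).1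
      have hbY : b ∉ Y := (mem_sdiff.mp hbmem).2
      have hYZcard : (Y \ Z).card = n := by
        rw [card_sdiff_comm (hY.trans hZ.symm), hcard]
      obtain ⟨a, hamem⟩ := card_pos.mp (hYZcard ▸ hnpos)
      have haY : a ∈ Y := (mem_sdiff.mp hamem).1
      have haZ : a ∉ Z := (mem_sdiff.mp hamem).2
      set Y1 : Finset X := insert b (Y.erase a) with hY1def
      have hY1P : Y1 ∈ P := swap_mem kstar k h1 h2 h3 hne P hP Y hY a b haY hbY hYP
      have hY1card : Y1.card = k := by
        rw [hY1def, card_insert_of_notMem (fun h => hbY (mem_of_mem_erase h)),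
          card_erase_of_mem haY, hY]
        omega
      have hsub : Z \ Y1 ⊂ Z \ Y := by
        constructor
        · intro x hx
          rw [mem_sdiff] at hx ⊢
          refine ⟨hx.1, fun hxY => ?_⟩
          apply hx.2
          rw [hY1def, mem_insert, mem_erase]
          exact Or.inr ⟨fun h => haZ (h ▸ hx.1), hxY⟩
        · intro hsub'
          have : b ∈ Z \ Y1 := hsub' hbmem
          rw [mem_sdiff, hY1def] at this
          exact this.2 (mem_insert_self b _)
      exact ih (Z \ Y1).card (hcard ▸ card_lt_card hsub) Y1 Z rfl hY1card hZ hY1P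

theorem stmt11 {X : Type*} [Fintype X] [DecidableEq X] (kstar k : ℕ)
    (h1 : kstar < k) (h2 : k < Fintype.card X)
    (h3 : 2 * k - kstar ≤ Fintype.card X)
    (P : Set (Finset X)) (hPk : ∀ Y ∈ P, Y.card = k)
    (hP : ∀ Z Y : Finset X, Z.card = k → Y.card = k → (Z ∩ Y).card = kstar →
      (Z ∈ P ↔ Y ∈ P)) :
    P = ∅ ∨ P = {Y : Finset X | Y.card = k} ∨
      (Fintype.card X = 2 * k ∧ kstar = 0 ∧
        ∀ Y : Finset X, Y.card = k → (Y ∈ P ↔ Yᶜ ∈ P)) := by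
  by_cases hne : Fintype.card X = 2 * k ∧ kstar = 0
  · refine Or.inr (Or.inr ⟨hne.1, hne.2, fun Y hY => ?_⟩)
    have hYc : Yᶜ.card = k := by rw [card_compl, hY, hne.1]; omega
    exact hP Y Yᶜ hY hYc (by rw [inter_compl, card_empty, hne.2])
  · rcases Set.eq_empty_or_nonempty P with hPe | ⟨Y0, hY0⟩
    · exact Or.inl hPe
    · right; left
      ext Z
      simp only [Set.mem_setOf_eq]
      constructor
      · exact hPk Z
      · intro hZ
        exact reach_mem kstar k h1 h2 h3 hne P hP (Z \ Y0).card Y0 Z rfl (hPk Y0 hY0) hZ hY0
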